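/- Let d ∈ 2ℕ and let a = (a_{k,l})_{k,l ∈ ℤ₊^{d/2}} be a positive (as an operator on ℓ₂(ℤ₊^{d/2})) rapidly decreasing double sequence. Then its operator square root b = a^{1/2} is also rapidly decreasing: for each m ≥ 0, r_m(a^{1/2})² ≲ r_{2m + d/2}(a). -/

import Mathlib

open scoped ENNReal InnerProductSpace

/-- The index set `ℤ₊^{d/2}`. -/
abbrev Idx (d : ℕ) := Fin (d / 2) → ℕ

/-- The Hilbert space `ℓ₂(ℤ₊^{d/2})`. -/
noncomputable abbrev SeqH (d : ℕ) := lp (fun _ : Idx d => ℂ) 2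

/-- The seminorm `r_m(a) = (Σ_{k,l} (|k|+1)^{2m} (|l|+1)^{2m} |a_{k,l}|²)^{1/2}`. -/
noncomputable def rsem (d m : ℕ) (a : Idx d → Idx d → ℂ) : ℝ≥0∞ :=
  (∑' k : Idx d, ∑' l : Idx d,
      ((∑ i, (k i : ℝ≥0∞)) + 1) ^ (2 * m) * ((∑ i, (l i : ℝ≥0∞)) + 1) ^ (2 * m) *
        (‖a k l‖₊ : ℝ≥0∞) ^ 2) ^ (1 / 2 : ℝ)

/-- A double sequence is rapidly decreasing if all seminorms `r_m` are finite. -/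
def RapidlyDecreasing (d : ℕ) (a : Idx d → Idx d → ℂ) : Prop :=
  ∀ m : ℕ, rsem d m a < ⊤

/-- The matrix of an operator on `ℓ₂(ℤ₊^{d/2})` with respect to the standard basis. -/
noncomputable def entries (d : ℕ) (A : SeqH d →L[ℂ] SeqH d) (k l : Idx d) : ℂ :=
  ⟪A (lp.single 2 l (1 : ℂ)), lp.single 2 k (1 : ℂ)⟫_ℂ

section Aux

open MeasureTheory
open scoped NNReal

/-- Hölder's inequality for `ℝ≥0∞`-valued tsums. -/
private lemma holder_tsum {ι : Type*} (u v : ι → ℝ≥0∞) {p q : ℝ}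
    (hpq : p.HolderConjugate q) :
    ∑' i, u i * v i ≤ (∑' i, u i ^ p) ^ (1 / p) * (∑' i, v i ^ q) ^ (1 / q) := by
  letI : MeasurableSpace ι := ⊤
  haveI : MeasurableSingletonClass ι := ⟨fun _ => MeasurableSpace.measurableSet_top⟩
  have hu : Measurable u := fun s _ => MeasurableSpace.measurableSet_top
  have hv : Measurable v := fun s _ => MeasurableSpace.measurableSet_top
  have h := ENNReal.lintegral_mul_le_Lp_mul_Lq (Measure.count (α := ι)) hpq
    hu.aemeasurable hv.aemeasurable
  simpa only [lintegral_count, Pi.mul_apply] using h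

/-- Product formula for tsums over pi types. -/
private lemma tsum_pi_prod (n : ℕ) (h : ℕ → ℝ≥0∞) :
    ∑' k : Fin n → ℕ, ∏ i, h (k i) = (∑' j, h j) ^ n := by
  induction n with
  | zero => simp [tsum_fintype]
  | succ n ih =>
    rw [← (Fin.consEquiv (fun _ : Fin (n + 1) => ℕ)).tsum_eq (fun k => ∏ i, h (k i))]
    rw [ENNReal.tsum_prod']
    have hterm : ∀ (x : ℕ) (k : Fin n → ℕ),
        (∏ i, h ((Fin.consEquiv (fun _ : Fin (n + 1) => ℕ)) (x, k) i))
          = h x * ∏ i, h (k i) := by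
      intro x k
      have h1 : (fun i => h ((Fin.cons x k : Fin (n+1) → ℕ) i))
          = Fin.cons (α := fun _ : Fin (n+1) => ℝ≥0∞) (h x) (fun i => h (k i)) := by
        funext i
        exact congrFun (Fin.comp_cons h x k) i
      calc (∏ i, h ((Fin.consEquiv (fun _ : Fin (n + 1) => ℕ)) (x, k) i))
          = ∏ i, Fin.cons (α := fun _ : Fin (n+1) => ℝ≥0∞) (h x) (fun i => h (k i)) i := by
            rw [← h1]; rfl
        _ = h x * ∏ i, h (k i) := Fin.prod_cons _ _
    simp only [hterm]
    simp only [ENNReal.tsum_mul_left]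
    rw [ENNReal.tsum_mul_right, ih, pow_succ']

private lemma tsum_nat_rpow_lt_top {p : ℝ} (hp : 1 < p) :
    ∑' j : ℕ, ((j : ℝ≥0∞) + 1) ^ (-p) < ⊤ := by
  have heq : ∀ j : ℕ, ((j : ℝ≥0∞) + 1) ^ (-p)
      = ((((j + 1 : ℕ) : ℝ≥0) ^ (-p) : ℝ≥0) : ℝ≥0∞) := by
    intro j
    rw [show ((j : ℝ≥0∞) + 1) = (((j + 1 : ℕ) : ℝ≥0) : ℝ≥0∞) by push_cast; ring]
    rw [← ENNReal.coe_rpow_of_ne_zero (by positivity)]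
  rw [tsum_congr heq, lt_top_iff_ne_top, ENNReal.tsum_coe_ne_top_iff_summable]
  rw [← NNReal.summable_coe]
  have : ∀ j : ℕ, ((((j + 1 : ℕ) : ℝ≥0) ^ (-p) : ℝ≥0) : ℝ) = ((j + 1 : ℕ) : ℝ) ^ (-p) := by
    intro j
    rw [NNReal.coe_rpow]
    norm_num
  rw [funext this]
  have hsum : Summable (fun n : ℕ => (n : ℝ) ^ (-p)) :=
    Real.summable_nat_rpow.mpr (by linarith)
  exact hsum.comp_injective (add_left_injective 1)

/-- The weight function. -/
private noncomputable def Wt (d : ℕ) (k : Idx d) : ℝ≥0∞ := (∑ i, (k i : ℝ≥0∞)) + 1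

private lemma Wt_ne_zero (d : ℕ) (k : Idx d) : Wt d k ≠ 0 := by
  simp [Wt]

private lemma Wt_ne_top (d : ℕ) (k : Idx d) : Wt d k ≠ ⊤ := by
  refine ENNReal.add_ne_top.2 ⟨?_, ENNReal.one_ne_top⟩
  exact (ENNReal.sum_lt_top.2 fun i _ => ENNReal.natCast_lt_top _).ne

/-- The constant `K = Σ_k (|k|+1)^{-4n/3}` where `n = d/2`. -/
private noncomputable def Kc (d : ℕ) : ℝ≥0∞ :=
  ∑' k : Idx d, Wt d k ^ (-(4 / 3 : ℝ) * (d / 2 : ℕ))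

private lemma Kc_lt_top (d : ℕ) (_hn0 : 0 < d / 2) : Kc d < ⊤ := by
  have key : ∀ k : Idx d,
      Wt d k ^ (-(4 / 3 : ℝ) * (d / 2 : ℕ)) ≤ ∏ i, ((k i : ℝ≥0∞) + 1) ^ (-(4 / 3) : ℝ) := by
    intro k
    have h1 : ∀ i, (k i : ℝ≥0∞) + 1 ≤ Wt d k := by
      intro i
      exact add_le_add_left
        (Finset.single_le_sum (f := fun i => (k i : ℝ≥0∞)) (fun _ _ => zero_le)
          (Finset.mem_univ i)) 1
    have h2 : (∏ i, ((k i : ℝ≥0∞) + 1)) ≤ Wt d k ^ (d / 2 : ℕ) := by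
      have := Finset.prod_le_pow_card Finset.univ (fun i : Fin (d / 2) => (k i : ℝ≥0∞) + 1)
        (Wt d k) (fun i _ => h1 i)
      simpa using this
    have h3 : Wt d k ^ (-(4 / 3 : ℝ) * (d / 2 : ℕ))
        = (Wt d k ^ ((d / 2 : ℕ) : ℝ)) ^ (-(4 / 3) : ℝ) := by
      rw [← ENNReal.rpow_mul]
      congr 1
      ring
    rw [h3]
    have h4 : (Wt d k ^ ((d / 2 : ℕ) : ℝ)) ^ (-(4 / 3) : ℝ)
        ≤ (∏ i, ((k i : ℝ≥0∞) + 1)) ^ (-(4 / 3) : ℝ) := by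
      rw [ENNReal.rpow_neg, ENNReal.rpow_neg]
      refine ENNReal.inv_le_inv.2 (ENNReal.rpow_le_rpow ?_ (by norm_num))
      rw [ENNReal.rpow_natCast]
      exact h2
    refine h4.trans_eq ?_
    exact (ENNReal.prod_rpow_of_ne_top (s := (Finset.univ : Finset (Fin (d / 2))))
      (f := fun i => ((k i : ℝ≥0∞) + 1))
      (fun i _ => ENNReal.add_ne_top.2 ⟨ENNReal.natCast_ne_top _, ENNReal.one_ne_top⟩)
      (-(4 / 3) : ℝ)).symm
  calc Kc d ≤ ∑' k : Idx d, ∏ i, ((k i : ℝ≥0∞) + 1) ^ (-(4 / 3) : ℝ) :=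
        ENNReal.tsum_le_tsum key
    _ = (∑' j : ℕ, ((j : ℝ≥0∞) + 1) ^ (-(4 / 3) : ℝ)) ^ (d / 2 : ℕ) :=
        tsum_pi_prod (d / 2) (fun j => ((j : ℝ≥0∞) + 1) ^ (-(4 / 3) : ℝ))
    _ < ⊤ := ENNReal.pow_lt_top (tsum_nat_rpow_lt_top (by norm_num))

private lemma sq_rpow_half (x : ℝ≥0∞) : (x ^ (1 / 2 : ℝ)) ^ 2 = x := by
  rw [← ENNReal.rpow_natCast (x ^ (1 / 2 : ℝ)) 2, ← ENNReal.rpow_mul]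
  norm_num

private lemma rsem_sq (d m : ℕ) (a : Idx d → Idx d → ℂ) :
    rsem d m a ^ 2
      = ∑' k : Idx d, ∑' l : Idx d,
          Wt d k ^ (2 * m) * Wt d l ^ (2 * m) * (‖a k l‖₊ : ℝ≥0∞) ^ 2 := by
  rw [rsem]
  exact sq_rpow_half _

/-- The central estimate. -/
private lemma key_estimate (d : ℕ) (a b : Idx d → Idx d → ℂ) (β : Idx d → ℝ≥0∞)
    (hb : ∀ k l, ((‖b k l‖₊ : ℝ≥0∞)) ^ 2 ≤ β k * β l)
    (hβ : ∀ k, (‖a k k‖₊ : ℝ≥0∞) = β k ^ 2) (m : ℕ) :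
    rsem d m b ^ 2 ≤ Kc d ^ (3 / 2 : ℝ) * rsem d (2 * m + d / 2) a := by
  set n := d / 2 with hn
  set M := 2 * m + n with hM
  set S2 := ∑' k : Idx d, ∑' l : Idx d,
      Wt d k ^ (2 * M) * Wt d l ^ (2 * M) * (‖a k l‖₊ : ℝ≥0∞) ^ 2 with hS2
  have hSrsem : rsem d M a = S2 ^ (1 / 2 : ℝ) := rfl
  set T := ∑' k : Idx d, Wt d k ^ (2 * m) * β k with hT
  -- Step 1 : rsem d m b ^ 2 ≤ T ^ 2
  have step1 : rsem d m b ^ 2 ≤ T ^ 2 := by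
    rw [rsem_sq]
    have hle : ∀ k l : Idx d,
        Wt d k ^ (2 * m) * Wt d l ^ (2 * m) * (‖b k l‖₊ : ℝ≥0∞) ^ 2
          ≤ (Wt d k ^ (2 * m) * β k) * (Wt d l ^ (2 * m) * β l) := by
      intro k l
      calc Wt d k ^ (2 * m) * Wt d l ^ (2 * m) * (‖b k l‖₊ : ℝ≥0∞) ^ 2
          ≤ Wt d k ^ (2 * m) * Wt d l ^ (2 * m) * (β k * β l) :=
            mul_le_mul_right (hb k l) _
        _ = (Wt d k ^ (2 * m) * β k) * (Wt d l ^ (2 * m) * β l) := by ring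
    calc (∑' k : Idx d, ∑' l : Idx d,
          Wt d k ^ (2 * m) * Wt d l ^ (2 * m) * (‖b k l‖₊ : ℝ≥0∞) ^ 2)
        ≤ ∑' k : Idx d, ∑' l : Idx d,
            (Wt d k ^ (2 * m) * β k) * (Wt d l ^ (2 * m) * β l) :=
          ENNReal.tsum_le_tsum fun k => ENNReal.tsum_le_tsum fun l => hle k l
      _ = T ^ 2 := by
          simp only [ENNReal.tsum_mul_left]
          rw [ENNReal.tsum_mul_right, hT, sq]
  -- Step 2 : Hölder
  set u : Idx d → ℝ≥0∞ := fun k => Wt d k ^ (M : ℝ) * β k with hu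
  set v : Idx d → ℝ≥0∞ := fun k => Wt d k ^ (-(n : ℝ)) with hv
  have huv : ∀ k, Wt d k ^ (2 * m) * β k = u k * v k := by
    intro k
    rw [hu, hv]
    have : Wt d k ^ (M : ℝ) * β k * Wt d k ^ (-(n : ℝ))
        = (Wt d k ^ (M : ℝ) * Wt d k ^ (-(n : ℝ))) * β k := by ring
    rw [this]
    congr 1
    rw [← ENNReal.rpow_add _ _ (Wt_ne_zero d k) (Wt_ne_top d k)]
    rw [show ((M : ℝ) + -(n : ℝ)) = ((2 * m : ℕ) : ℝ) by rw [hM]; push_cast; ring]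
    rw [ENNReal.rpow_natCast]
  have hconj : (4 : ℝ).HolderConjugate (4 / 3) := Real.holderConjugate_iff.mpr ⟨by norm_num, by norm_num⟩
  have step2 : T ≤ (∑' k : Idx d, u k ^ (4 : ℝ)) ^ (1 / 4 : ℝ)
      * (∑' k : Idx d, v k ^ (4 / 3 : ℝ)) ^ (3 / 4 : ℝ) := by
    rw [hT, tsum_congr huv]
    have := holder_tsum u v hconj
    rwa [show (1 / (4 / 3) : ℝ) = 3 / 4 by norm_num] at this
  -- Step 3 : bound the two Hölder factors
  have hfac1 : (∑' k : Idx d, u k ^ (4 : ℝ)) ≤ S2 := by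
    have hterm : ∀ k : Idx d, u k ^ (4 : ℝ)
        = Wt d k ^ (2 * M) * Wt d k ^ (2 * M) * (‖a k k‖₊ : ℝ≥0∞) ^ 2 := by
      intro k
      have e1 : β k ^ (4 : ℝ) = (β k ^ 2) ^ 2 := by
        rw [← pow_mul, ← ENNReal.rpow_natCast (β k) (2 * 2)]
        norm_num
      have e2 : (Wt d k ^ (M : ℝ)) ^ (4 : ℝ)
          = Wt d k ^ (2 * M) * Wt d k ^ (2 * M) := by
        rw [← ENNReal.rpow_natCast (Wt d k) (2 * M),
          ← ENNReal.rpow_add _ _ (Wt_ne_zero d k) (Wt_ne_top d k),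
          ← ENNReal.rpow_mul]
        congr 1
        push_cast
        ring
      simp only [hu]
      rw [ENNReal.mul_rpow_of_nonneg _ _ (by norm_num : (0:ℝ) ≤ 4), e2, e1, hβ k]
    rw [tsum_congr hterm, hS2]
    refine ENNReal.tsum_le_tsum fun k => ?_
    exact ENNReal.le_tsum k
  have hfac2 : (∑' k : Idx d, v k ^ (4 / 3 : ℝ)) = Kc d := by
    refine tsum_congr fun k => ?_
    rw [hv, ← ENNReal.rpow_mul]
    congr 1
    ring
  -- Combine
  have step3 : T ≤ S2 ^ (1 / 4 : ℝ) * Kc d ^ (3 / 4 : ℝ) := by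
    refine step2.trans ?_
    rw [hfac2]
    exact mul_le_mul_left (ENNReal.rpow_le_rpow hfac1 (by norm_num)) _
  have step4 : T ^ 2 ≤ Kc d ^ (3 / 2 : ℝ) * rsem d M a := by
    calc T ^ 2 ≤ (S2 ^ (1 / 4 : ℝ) * Kc d ^ (3 / 4 : ℝ)) ^ 2 := pow_le_pow_left' step3 2
      _ = Kc d ^ (3 / 2 : ℝ) * S2 ^ (1 / 2 : ℝ) := by
          rw [mul_pow]
          rw [← ENNReal.rpow_natCast (S2 ^ (1 / 4 : ℝ)) 2, ← ENNReal.rpow_mul]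
          rw [← ENNReal.rpow_natCast (Kc d ^ (3 / 4 : ℝ)) 2, ← ENNReal.rpow_mul]
          norm_num
          ring
      _ = Kc d ^ (3 / 2 : ℝ) * rsem d M a := by rw [hSrsem]
  exact step1.trans step4

end Aux

/-- If `a` is a positive (as an operator on `ℓ₂(ℤ₊^{d/2})`) rapidly decreasing double
sequence, then its operator square root `b = a^{1/2}` is also rapidly decreasing;
quantitatively, `r_m(a^{1/2})² ≲ r_{2m+d/2}(a)` for each `m ≥ 0`. -/
theorem stmt7 (d : ℕ) (hd : 0 < d) (hde : Even d)
    (A B : SeqH d →L[ℂ] SeqH d) (hA : A.IsPositive) (hB : B.IsPositive)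
    (hBB : B.comp B = A)
    (ha : RapidlyDecreasing d (entries d A)) :
    RapidlyDecreasing d (entries d B) ∧
      ∃ C : ℝ≥0∞, C ≠ ⊤ ∧ ∀ m : ℕ,
        rsem d m (entries d B) ^ 2 ≤ C * rsem d (2 * m + d / 2) (entries d A) := by
  classical
  have hn0 : 0 < d / 2 := by
    rcases hde with ⟨t, rfl⟩
    omega
  -- basic facts about basis vectors
  have he_nnnorm : ∀ k : Idx d, ‖(lp.single 2 k (1 : ℂ) : SeqH d)‖₊ = 1 := by
    intro k
    have h : ‖(lp.single 2 k (1 : ℂ) : SeqH d)‖ = 1 := by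
      have := lp.norm_single (p := 2) (E := fun _ : Idx d => ℂ)
        (by norm_num) k (1 : ℂ)
      simpa using this
    exact NNReal.coe_injective (by simpa using h)
  have hswap : ∀ u v : SeqH d, ⟪B u, v⟫_ℂ = ⟪u, B v⟫_ℂ := by
    intro u v
    conv_lhs => rw [← hB.isSelfAdjoint.adjoint_eq]
    exact ContinuousLinearMap.adjoint_inner_left B v u
  -- the β sequence
  set β : Idx d → ℝ≥0∞ := fun k => (‖B (lp.single 2 k (1 : ℂ))‖₊ : ℝ≥0∞) with hβdef
  have hb : ∀ k l, ((‖entries d B k l‖₊ : ℝ≥0∞)) ^ 2 ≤ β k * β l := by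
    intro k l
    have h1 : ‖entries d B k l‖₊ ≤ ‖B (lp.single 2 l (1 : ℂ))‖₊ := by
      have := nnnorm_inner_le_nnnorm (𝕜 := ℂ) (B (lp.single 2 l (1 : ℂ)))
        (lp.single 2 k (1 : ℂ))
      rw [he_nnnorm k, mul_one] at this
      exact this
    have h2 : ‖entries d B k l‖₊ ≤ ‖B (lp.single 2 k (1 : ℂ))‖₊ := by
      have heq : entries d B k l = ⟪(lp.single 2 l (1 : ℂ) : SeqH d),
          B (lp.single 2 k (1 : ℂ))⟫_ℂ := hswap _ _
      rw [heq]
      have := nnnorm_inner_le_nnnorm (𝕜 := ℂ) (lp.single 2 l (1 : ℂ) : SeqH d)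
        (B (lp.single 2 k (1 : ℂ)))
      rw [he_nnnorm l, one_mul] at this
      exact this
    calc ((‖entries d B k l‖₊ : ℝ≥0∞)) ^ 2
        = (‖entries d B k l‖₊ : ℝ≥0∞) * (‖entries d B k l‖₊ : ℝ≥0∞) := sq _
      _ ≤ β k * β l := by
          exact mul_le_mul' (ENNReal.coe_le_coe.2 h2) (ENNReal.coe_le_coe.2 h1)
  have hβa : ∀ k, (‖entries d A k k‖₊ : ℝ≥0∞) = β k ^ 2 := by
    intro k
    have h1 : entries d A k k
        = ((‖B (lp.single 2 k (1 : ℂ))‖ : ℂ)) ^ 2 := by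
      rw [entries, ← hBB, ContinuousLinearMap.comp_apply, hswap,
        inner_self_eq_norm_sq_to_K]
      norm_cast
    rw [h1, nnnorm_pow, ENNReal.coe_pow]
    congr 1
    simp [hβdef]
  -- conclude
  have hC : Kc d ^ (3 / 2 : ℝ) ≠ ⊤ :=
    ENNReal.rpow_ne_top_of_nonneg (by norm_num) (Kc_lt_top d hn0).ne
  have hkey : ∀ m : ℕ, rsem d m (entries d B) ^ 2
      ≤ Kc d ^ (3 / 2 : ℝ) * rsem d (2 * m + d / 2) (entries d A) :=
    fun m => key_estimate d (entries d A) (entries d B) β hb hβa m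
  refine ⟨?_, Kc d ^ (3 / 2 : ℝ), hC, hkey⟩
  intro m
  rw [lt_top_iff_ne_top]
  intro hcon
  have h2 := hkey m
  rw [hcon] at h2
  have htop : (⊤ : ℝ≥0∞) ^ 2 = ⊤ := by simp
  rw [htop] at h2
  have hlt : Kc d ^ (3 / 2 : ℝ) * rsem d (2 * m + d / 2) (entries d A) < ⊤ :=
    ENNReal.mul_lt_top (lt_top_iff_ne_top.2 hC) (ha (2 * m + d / 2))
  exact absurd h2 (not_le.2 hlt)
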